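/- (Gordan's Lemma, general form) A commutative, cancellative, torsion-free monoid M of finite rank is finitely generated if and only if its group of differences gp(M) is finitely generated and the cone R_+ M spanned by M in R^(rank M) is a finite polyhedral rational cone. -/

import Mathlib

/-- Componentwise inclusion `ℚ^r → ℝ^r`. -/
def toR {r : ℕ} (v : Fin r → ℚ) : Fin r → ℝ := fun i => (v i : ℝ)

/-- The cone `ℝ₊ s` spanned by a subset `s ⊆ ℝ^r`: all finite nonnegative real
combinations of elements of `s`. -/
def coneOf {r : ℕ} (s : Set (Fin r → ℝ)) : Set (Fin r → ℝ) :=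
  {x | ∃ (n : ℕ) (cc : Fin n → ℝ) (w : Fin n → Fin r → ℝ),
    (∀ i, 0 ≤ cc i) ∧ (∀ i, w i ∈ s) ∧ x = ∑ i, cc i • w i}

namespace Gordan
open Matrix
variable {r : ℕ}

lemma toR_inj : Function.Injective (toR (r := r)) := by
  intro x y h
  funext i
  have h2 := congrFun h i
  simpa [toR] using h2

lemma toR_add (x y : Fin r → ℚ) : toR (x + y) = toR x + toR y := by
  funext i; simp [toR]

lemma toR_smul (q : ℚ) (x : Fin r → ℚ) : toR (q • x) = (q : ℝ) • toR x := by
  funext i; simp [toR]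

lemma toR_nsmul (n : ℕ) (x : Fin r → ℚ) : toR (n • x) = (n : ℝ) • toR x := by
  funext i; simp [toR]

lemma toR_sum {ι : Type*} (s : Finset ι) (f : ι → Fin r → ℚ) :
    toR (∑ i ∈ s, f i) = ∑ i ∈ s, toR (f i) := by
  classical
  induction s using Finset.induction with
  | empty => funext i; simp [toR]
  | insert _ _ h ih => rw [Finset.sum_insert h, Finset.sum_insert h, toR_add, ih]

lemma mem_coneOf_self {s : Set (Fin r → ℝ)} {x : Fin r → ℝ} (hx : x ∈ s) : x ∈ coneOf s :=
  ⟨1, fun _ => 1, fun _ => x, fun _ => zero_le_one, fun _ => hx, by simp⟩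

lemma zero_mem_coneOf (s : Set (Fin r → ℝ)) : (0 : Fin r → ℝ) ∈ coneOf s :=
  ⟨0, fun i => i.elim0, fun i => i.elim0, fun i => i.elim0, fun i => i.elim0, by simp⟩

lemma add_mem_coneOf {s : Set (Fin r → ℝ)} {x y : Fin r → ℝ}
    (hx : x ∈ coneOf s) (hy : y ∈ coneOf s) : x + y ∈ coneOf s := by
  obtain ⟨n, c, w, hc, hw, rfl⟩ := hx
  obtain ⟨m, d, v, hd, hv, rfl⟩ := hy
  refine ⟨n + m, Fin.append c d, Fin.append w v, ?_, ?_, ?_⟩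
  · intro i
    refine Fin.addCases (fun j => ?_) (fun j => ?_) i
    · rw [Fin.append_left]; exact hc j
    · rw [Fin.append_right]; exact hd j
  · intro i
    refine Fin.addCases (fun j => ?_) (fun j => ?_) i
    · rw [Fin.append_left]; exact hw j
    · rw [Fin.append_right]; exact hv j
  · rw [Fin.sum_univ_add]
    simp [Fin.append_left, Fin.append_right]

lemma smul_mem_coneOf {s : Set (Fin r → ℝ)} {x : Fin r → ℝ} {c : ℝ} (hc : 0 ≤ c)
    (hx : x ∈ coneOf s) : c • x ∈ coneOf s := by
  obtain ⟨n, cc, w, hcc, hw, rfl⟩ := hx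
  exact ⟨n, fun i => c * cc i, w, fun i => mul_nonneg hc (hcc i), hw, by
    rw [Finset.smul_sum]
    exact Finset.sum_congr rfl fun i _ => by rw [smul_smul]⟩

lemma coneOf_mono {s u : Set (Fin r → ℝ)} (h : s ⊆ u) : coneOf s ⊆ coneOf u := by
  rintro x ⟨n, c, w, hc, hw, rfl⟩
  exact ⟨n, c, w, hc, fun i => h (hw i), rfl⟩

lemma coneOf_subset {s u : Set (Fin r → ℝ)} (h : s ⊆ coneOf u) : coneOf s ⊆ coneOf u := by
  rintro x ⟨n, c, w, hc, hw, rfl⟩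
  refine Finset.sum_induction _ (· ∈ coneOf u) (fun _ _ => add_mem_coneOf) (zero_mem_coneOf u) ?_
  intro i _
  exact smul_mem_coneOf (hc i) (h (hw i))

/-- Carathéodory-type reduction: a nonnegative combination can be rewritten as a nonnegative
combination of a linearly independent subfamily. -/
lemma carat : ∀ (n : ℕ) (c : Fin n → ℝ) (w : Fin n → Fin r → ℝ), (∀ i, 0 ≤ c i) →
    ∃ (m : ℕ) (c' : Fin m → ℝ) (w' : Fin m → Fin r → ℝ),
      (∀ i, 0 ≤ c' i) ∧ (∀ i, w' i ∈ Set.range w) ∧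
      (∑ i, c' i • w' i) = ∑ i, c i • w i ∧ LinearIndependent ℝ w' := by
  intro n
  induction n using Nat.strong_induction_on with
  | _ n IH =>
    intro c w hc
    by_cases hind : LinearIndependent ℝ w
    · exact ⟨n, c, w, hc, fun i => ⟨i, rfl⟩, rfl, hind⟩
    · obtain ⟨d, hd0, i₀, hdi₀⟩ := Fintype.not_linearIndependent_iff.1 hind
      -- n must be positive
      rcases n with - | n'
      · exact (hind linearIndependent_empty_type).elim
      -- wlog there is a positive coefficient
      have key : ∀ d : Fin (n' + 1) → ℝ, (∑ i, d i • w i) = 0 → ∀ i₀, 0 < d i₀ →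
          ∃ (m : ℕ) (c' : Fin m → ℝ) (w' : Fin m → Fin r → ℝ),
            (∀ i, 0 ≤ c' i) ∧ (∀ i, w' i ∈ Set.range w) ∧
            (∑ i, c' i • w' i) = ∑ i, c i • w i ∧ LinearIndependent ℝ w' := by
        intro d hd0 j₀ hj₀
        classical
        set T : Finset (Fin (n' + 1)) := Finset.univ.filter (fun i => 0 < d i) with hT
        have hTne : T.Nonempty := ⟨j₀, by simp [hT, hj₀]⟩
        obtain ⟨i₁, hi₁T, hi₁min⟩ := T.exists_min_image (fun i => c i / d i) hTne
        have hdi₁ : 0 < d i₁ := by simpa [hT] using hi₁T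
        set lam : ℝ := c i₁ / d i₁ with hlam
        have hlam0 : 0 ≤ lam := div_nonneg (hc i₁) hdi₁.le
        set c2 : Fin (n' + 1) → ℝ := fun i => c i - lam * d i with hc2
        have hc2nn : ∀ i, 0 ≤ c2 i := by
          intro i
          by_cases hpos : 0 < d i
          · have := hi₁min i (by simp [hT, hpos])
            have : lam * d i ≤ c i := by
              rw [div_le_div_iff₀ hdi₁ hpos] at this
              calc lam * d i = c i₁ / d i₁ * d i := rfl
                _ ≤ c i := by
                  rw [div_mul_eq_mul_div, div_le_iff₀ hdi₁]
                  linarith [this]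
            simpa [hc2] using this
          · push_neg at hpos
            have : lam * d i ≤ 0 := mul_nonpos_of_nonneg_of_nonpos hlam0 hpos
            have := hc i
            simp only [hc2]
            linarith
        have hc2i₁ : c2 i₁ = 0 := by
          simp [hc2, hlam, div_mul_cancel₀ _ hdi₁.ne']
        have hsum2 : (∑ i, c2 i • w i) = ∑ i, c i • w i := by
          have : (∑ i, c2 i • w i) = (∑ i, c i • w i) - lam • ∑ i, d i • w i := by
            rw [Finset.smul_sum, ← Finset.sum_sub_distrib]
            refine Finset.sum_congr rfl fun i _ => ?_
            simp [hc2, sub_smul, smul_smul]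
          rw [this, hd0, smul_zero, sub_zero]
        -- drop index i₁
        obtain ⟨m, c', w', h1, h2, h3, h4⟩ :=
          IH n' (Nat.lt_succ_self n') (fun j => c2 (i₁.succAbove j)) (fun j => w (i₁.succAbove j))
            (fun j => hc2nn _)
        refine ⟨m, c', w', h1, fun i => ?_, ?_, h4⟩
        · obtain ⟨j, hj⟩ := h2 i
          exact ⟨i₁.succAbove j, hj⟩
        · rw [h3, ← hsum2, Fin.sum_univ_succAbove (fun i => c2 i • w i) i₁, hc2i₁, zero_smul,
            zero_add]
      rcases lt_trichotomy (d i₀) 0 with hneg | hzero | hpos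
      · refine key (-d) ?_ i₀ (by simpa using hneg)
        rw [← neg_zero, ← hd0, ← Finset.sum_neg_distrib]
        exact Finset.sum_congr rfl fun i _ => by simp
      · exact absurd hzero hdi₀
      · exact key d hd0 i₀ hpos

/-- If a rational vector is a real linear combination of linearly independent rational
vectors, the coefficients are rational. -/
lemma castHom_mulVec {m k : ℕ} (M : Matrix (Fin m) (Fin k) ℚ) (v : Fin k → ℚ) :
    (fun i => ((M *ᵥ v) i : ℝ)) = (M.map Rat.cast) *ᵥ (fun j => (v j : ℝ)) := by
  funext i
  simp only [Matrix.mulVec, dotProduct, Matrix.map_apply]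
  push_cast
  rfl

lemma rat_coeffs {n : ℕ} (w : Fin n → Fin r → ℚ) (cc : Fin n → ℝ) (x : Fin r → ℚ)
    (hind : LinearIndependent ℝ (fun i => toR (w i)))
    (heq : toR x = ∑ i, cc i • toR (w i)) :
    ∃ c : Fin n → ℚ, (∀ i, (c i : ℝ) = cc i) ∧ x = ∑ i, c i • w i := by
  classical
  set A : Matrix (Fin r) (Fin n) ℚ := Matrix.of (fun j i => w i j) with hA
  set Ar : Matrix (Fin r) (Fin n) ℝ := A.map (Rat.cast) with hAr
  have hmv : ∀ v : Fin n → ℝ, Ar *ᵥ v = ∑ i, v i • toR (w i) := by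
    intro v
    funext j
    simp only [Matrix.mulVec, dotProduct, hAr, hA, Matrix.map_apply, Matrix.of_apply,
      Finset.sum_apply, Pi.smul_apply, smul_eq_mul, toR]
    exact Finset.sum_congr rfl fun i _ => mul_comm _ _
  have hdetR : (Arᵀ * Ar).det ≠ 0 := by
    intro h0
    obtain ⟨v, hv, hv0⟩ := (Matrix.exists_mulVec_eq_zero_iff).2 h0
    have : Ar *ᵥ v = 0 := by
      have := Matrix.ker_mulVecLin_transpose_mul_self Ar
      have hmem : v ∈ LinearMap.ker (Arᵀ * Ar).mulVecLin := by
        rw [LinearMap.mem_ker, Matrix.mulVecLin_apply]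
        exact hv0
      rw [this] at hmem
      simpa [Matrix.mulVecLin_apply] using hmem
    rw [hmv] at this
    have := Fintype.linearIndependent_iff.1 hind v this
    exact hv (funext this)
  have hcast : ⇑(Rat.castHom ℝ) = (Rat.cast : ℚ → ℝ) := rfl
  have hABmap : Arᵀ * Ar = ((Aᵀ * A).map (Rat.cast : ℚ → ℝ)) := by
    rw [hAr, ← hcast, Matrix.map_mul, Matrix.transpose_map]
  have hdetQ : (Aᵀ * A).det ≠ 0 := by
    intro h0
    apply hdetR
    have h1 := (RingHom.map_det (Rat.castHom ℝ) (Aᵀ * A)).symm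
    rw [RingHom.mapMatrix_apply] at h1
    rw [hABmap, ← hcast, h1, h0]
    simp
  set B := Aᵀ * A with hB
  have hBunit : IsUnit B.det := isUnit_iff_ne_zero.2 hdetQ
  set c : Fin n → ℚ := B⁻¹ *ᵥ (Aᵀ *ᵥ x) with hcdef
  have hBc : B *ᵥ c = Aᵀ *ᵥ x := by
    rw [hcdef, Matrix.mulVec_mulVec, Matrix.mul_nonsing_inv _ hBunit, Matrix.one_mulVec]
  -- real version: Br *ᵥ cc = Arᵀ *ᵥ toR x
  have hBr : (Arᵀ * Ar) *ᵥ cc = Arᵀ *ᵥ (toR x) := by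
    rw [← Matrix.mulVec_mulVec, hmv cc, ← heq]
  have hccrat : (fun i => (c i : ℝ)) = cc := by
    have hinj : Function.Injective (fun z : Fin n → ℝ => (Arᵀ * Ar) *ᵥ z) := by
      intro z1 z2 hz
      by_contra hne
      have h2 : (Arᵀ * Ar) *ᵥ (z1 - z2) = 0 := by
        rw [Matrix.mulVec_sub]
        simpa [sub_eq_zero] using hz
      have hdz : z1 - z2 ≠ 0 := sub_ne_zero.2 hne
      exact hdetR ((Matrix.exists_mulVec_eq_zero_iff).1 ⟨z1 - z2, hdz, h2⟩)
    apply hinj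
    simp only [hBr]
    have h3 : (Arᵀ * Ar) *ᵥ (fun i => (c i : ℝ)) = (fun i => (((B *ᵥ c) i : ℚ) : ℝ)) := by
      rw [castHom_mulVec B c, hABmap, hB]
    rw [h3, hBc, castHom_mulVec (Aᵀ) x]
    have h4 : (Aᵀ).map (Rat.cast : ℚ → ℝ) = Arᵀ := by
      rw [Matrix.transpose_map]
    rw [h4]
    rfl
  refine ⟨c, fun i => congrFun hccrat i, ?_⟩
  apply toR_inj
  rw [heq, ← hccrat]
  have : toR (∑ i, c i • w i) = ∑ i, (c i : ℝ) • toR (w i) := by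
    funext j
    simp only [toR, Finset.sum_apply, Pi.smul_apply, smul_eq_mul]
    push_cast
    rfl
  rw [this]

lemma stepC (s : Set (Fin r → ℚ)) (x : Fin r → ℚ) (hx : toR x ∈ coneOf (toR '' s)) :
    ∃ (n : ℕ) (c : Fin n → ℚ) (w : Fin n → Fin r → ℚ),
      (∀ i, 0 ≤ c i) ∧ (∀ i, w i ∈ s) ∧ x = ∑ i, c i • w i := by
  obtain ⟨n, cc, w, hcc, hw, hxe⟩ := hx
  obtain ⟨m, c', w', h1, h2, h3, h4⟩ := carat n cc w hcc
  have hw' : ∀ i, w' i ∈ toR '' s := fun i => by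
    obtain ⟨j, hj⟩ := h2 i
    rw [← hj]; exact hw j
  choose u hu1 hu2 using hw'
  have hind : LinearIndependent ℝ (fun i => toR (u i)) := by
    have : (fun i => toR (u i)) = w' := funext hu2
    rw [this]; exact h4
  have heq : toR x = ∑ i, c' i • toR (u i) := by
    rw [hxe, ← h3]
    exact Finset.sum_congr rfl fun i _ => by rw [hu2]
  obtain ⟨c, hc1, hc2⟩ := rat_coeffs u c' x hind heq
  refine ⟨m, c, u, fun i => ?_, hu1, hc2⟩
  have := h1 i
  rw [← hc1 i] at this
  exact_mod_cast this

lemma stepC_finset (t : Finset (Fin r → ℚ)) (x : Fin r → ℚ)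
    (hx : toR x ∈ coneOf (toR '' (↑t : Set (Fin r → ℚ)))) :
    ∃ q : (Fin r → ℚ) → ℚ, (∀ τ, 0 ≤ q τ) ∧ x = ∑ τ ∈ t, q τ • τ := by
  classical
  obtain ⟨n, c, w, hc, hw, hxe⟩ := stepC (↑t) x hx
  refine ⟨fun τ => ∑ i ∈ Finset.univ.filter (fun i => w i = τ), c i,
    fun τ => Finset.sum_nonneg (fun i _ => hc i), ?_⟩
  rw [hxe, ← Finset.sum_fiberwise_of_maps_to (g := w) (fun i _ => hw i) (fun i => c i • w i)]
  refine Finset.sum_congr rfl fun τ _ => ?_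
  rw [Finset.sum_smul]
  refine Finset.sum_congr rfl fun i hi => ?_
  rw [(Finset.mem_filter.1 hi).2]

lemma den_dvd_int (q : ℚ) (d : ℕ) (hdvd : q.den ∣ d) : ∃ z : ℤ, (d : ℚ) * q = z := by
  refine ⟨q.num * (d / q.den : ℕ), ?_⟩
  have h2 : (d : ℚ) = (q.den : ℚ) * ((d / q.den : ℕ) : ℚ) := by
    rw [← Nat.cast_mul, Nat.mul_div_cancel' hdvd]
  have h3 : (q.den : ℚ) * q = (q.num : ℚ) := by
    rw [mul_comm]
    exact_mod_cast Rat.mul_den_eq_num q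
  calc (d : ℚ) * q = ((q.den : ℚ) * q) * ((d / q.den : ℕ) : ℚ) := by rw [h2]; ring
    _ = (q.num : ℚ) * ((d / q.den : ℕ) : ℚ) := by rw [h3]
    _ = ((q.num * (d / q.den : ℕ) : ℤ) : ℚ) := by rw [Int.cast_mul, Int.cast_natCast]

lemma den_dvd_nat {q : ℚ} (hq : 0 ≤ q) {d : ℕ} (hdvd : q.den ∣ d) :
    ∃ k : ℕ, (d : ℚ) * q = k := by
  obtain ⟨z, hz⟩ := den_dvd_int q d hdvd
  have hz0 : 0 ≤ z := by
    have : (0 : ℚ) ≤ (z : ℚ) := by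
      rw [← hz]
      positivity
    exact_mod_cast this
  exact ⟨z.toNat, by rw [hz]; exact_mod_cast (Int.toNat_of_nonneg hz0).symm⟩

/-- Any rational vector in the real cone over `M` has a positive multiple in `M`. -/
lemma exists_nsmul_mem (M : AddSubmonoid (Fin r → ℚ)) (x : Fin r → ℚ)
    (hx : toR x ∈ coneOf (toR '' (M : Set (Fin r → ℚ)))) :
    ∃ d : ℕ, 0 < d ∧ d • x ∈ M := by
  classical
  obtain ⟨n, c, w, hc, hw, rfl⟩ := stepC (↑M) x hx
  set d : ℕ := ∏ i, (c i).den with hd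
  have hdpos : 0 < d := Finset.prod_pos (fun i _ => (c i).pos)
  refine ⟨d, hdpos, ?_⟩
  rw [Finset.smul_sum]
  refine AddSubmonoid.sum_mem M (fun i _ => ?_)
  obtain ⟨k, hk⟩ := den_dvd_nat (hc i) (Finset.dvd_prod_of_mem (fun i => (c i).den)
    (Finset.mem_univ i))
  have : d • (c i • w i) = k • w i := by
    rw [← Nat.cast_smul_eq_nsmul ℚ d, ← Nat.cast_smul_eq_nsmul ℚ k, smul_smul, hk]
  rw [this]
  exact AddSubmonoid.nsmul_mem M (hw i) k

lemma exists_common_den (G : AddSubgroup (Fin r → ℚ)) (hG : G.FG) :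
    ∃ N : ℕ, 0 < N ∧ ∀ g ∈ G, ∀ i, ∃ z : ℤ, (N : ℚ) * g i = z := by
  classical
  obtain ⟨S, hS⟩ := hG
  refine ⟨∏ g ∈ S, ∏ i, (g i).den, Finset.prod_pos (fun g _ => Finset.prod_pos
    (fun i _ => (g i).pos)), ?_⟩
  intro g hg
  rw [← hS] at hg
  induction hg using AddSubgroup.closure_induction with
  | mem g hgS =>
    intro i
    refine den_dvd_int _ _ ?_
    exact dvd_trans (Finset.dvd_prod_of_mem (fun i => (g i).den) (Finset.mem_univ i))
      (Finset.dvd_prod_of_mem (fun g => ∏ i, (g i).den) hgS)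
  | zero => intro i; exact ⟨0, by simp⟩
  | add x y _ _ hx hy =>
    intro i
    obtain ⟨z1, hz1⟩ := hx i
    obtain ⟨z2, hz2⟩ := hy i
    exact ⟨z1 + z2, by push_cast [← hz1, ← hz2]; simp [Pi.add_apply]; ring⟩
  | neg x _ hx =>
    intro i
    obtain ⟨z, hz⟩ := hx i
    exact ⟨-z, by push_cast [← hz]; simp [Pi.neg_apply]⟩

lemma bounded_finite (G : AddSubgroup (Fin r → ℚ)) (hG : G.FG) (B : Fin r → ℚ) :
    {g : Fin r → ℚ | g ∈ G ∧ ∀ i, |g i| ≤ B i}.Finite := by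
  classical
  obtain ⟨N, hN, hden⟩ := exists_common_den G hG
  set K : Fin r → ℤ := fun i => ⌈(N : ℚ) * B i⌉ with hK
  refine Set.Finite.subset (Set.Finite.image (fun z : Fin r → ℤ => fun i => (z i : ℚ) / N)
    (Set.Finite.pi (fun i => (Finset.Icc (-(K i)) (K i)).finite_toSet))) ?_
  rintro g ⟨hgG, hgB⟩
  choose z hz using hden g hgG
  refine ⟨z, fun i _ => ?_, ?_⟩
  · simp only [Finset.coe_Icc, Set.mem_Icc, ← abs_le]
    have h1 : |(z i : ℚ)| ≤ (N : ℚ) * B i := by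
      rw [← hz i, abs_mul, abs_of_nonneg (by positivity : (0 : ℚ) ≤ (N : ℚ))]
      exact mul_le_mul_of_nonneg_left (hgB i) (by positivity)
    have h2 : |(z i : ℚ)| ≤ ((K i : ℤ) : ℚ) := le_trans h1 (Int.le_ceil _)
    exact_mod_cast h2
  · funext i
    have := hz i
    field_simp
    linarith [this]

lemma exists_minimal_le {ι : Type*} [Fintype ι] (S : Set (ι → ℕ)) (a : ι → ℕ) (ha : a ∈ S) :
    ∃ b ∈ S, b ≤ a ∧ ∀ c ∈ S, c ≤ b → c = b := by
  classical
  have key : ∀ n : ℕ, ∀ a, a ∈ S → (∑ i, a i) < n →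
      ∃ b ∈ S, b ≤ a ∧ ∀ c ∈ S, c ≤ b → c = b := by
    intro n
    induction n with
    | zero => intro a _ h; exact absurd h (Nat.not_lt_zero _)
    | succ n IH =>
      intro a haS hlt
      by_cases hmin : ∀ c ∈ S, c ≤ a → c = a
      · exact ⟨a, haS, le_refl a, hmin⟩
      · push_neg at hmin
        obtain ⟨c, hcS, hca, hne⟩ := hmin
        have hsum : ∑ i, c i < ∑ i, a i := by
          have hex : ∃ i, c i < a i := by
            by_contra hno
            push_neg at hno
            exact hne (funext fun i => le_antisymm (hca i) (hno i))
          obtain ⟨j, hj⟩ := hex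
          exact Finset.sum_lt_sum (fun i _ => hca i) ⟨j, Finset.mem_univ j, hj⟩
        obtain ⟨b, h1, h2, h3⟩ := IH c hcS (lt_of_lt_of_le hsum (Nat.lt_succ_iff.1 hlt))
        exact ⟨b, h1, le_trans h2 hca, h3⟩
  exact key (∑ i, a i + 1) a ha (Nat.lt_succ_self _)

lemma minimals_finite {ι : Type*} [Fintype ι] (S : Set (ι → ℕ)) :
    {b | b ∈ S ∧ ∀ c ∈ S, c ≤ b → c = b}.Finite := by
  have hpwo : Set.IsPWO {b | b ∈ S ∧ ∀ c ∈ S, c ≤ b → c = b} :=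
    Set.isPWO_of_wellQuasiOrderedLE _
  refine IsAntichain.finite_of_partiallyWellOrderedOn ?_ hpwo
  rintro x ⟨hxS, hxmin⟩ y ⟨hyS, hymin⟩ hxy hle
  exact hxy (hymin x hxS hle)

lemma toR_zero : toR (0 : Fin r → ℚ) = 0 := funext fun i => by simp [toR]

lemma cone_closure (S : Set (Fin r → ℚ)) (m : Fin r → ℚ) (hm : m ∈ AddSubmonoid.closure S) :
    toR m ∈ coneOf (toR '' S) := by
  induction hm using AddSubmonoid.closure_induction with
  | mem x hx => exact mem_coneOf_self ⟨x, hx, rfl⟩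
  | zero => rw [toR_zero]; exact zero_mem_coneOf _
  | add x y _ _ ihx ihy => rw [toR_add]; exact add_mem_coneOf ihx ihy

theorem main {r : ℕ} (M : AddSubmonoid (Fin r → ℚ)) :
    M.FG ↔
      (AddSubgroup.closure (M : Set (Fin r → ℚ))).FG ∧
      ∃ t : Finset (Fin r → ℚ),
        coneOf (toR '' (M : Set (Fin r → ℚ))) = coneOf (toR '' (↑t : Set (Fin r → ℚ))) := by
  classical
  constructor
  · rintro ⟨S, hS⟩
    have hSM : (S : Set (Fin r → ℚ)) ⊆ ↑M := by
      rw [← hS]; exact AddSubmonoid.subset_closure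
    constructor
    · refine ⟨S, ?_⟩
      apply le_antisymm
      · rw [AddSubgroup.closure_le]
        exact fun x hx => AddSubgroup.subset_closure (hSM hx)
      · rw [AddSubgroup.closure_le]
        intro m hm
        have h2 : AddSubmonoid.closure (S : Set (Fin r → ℚ)) ≤
            (AddSubgroup.closure (S : Set (Fin r → ℚ))).toAddSubmonoid :=
          AddSubmonoid.closure_le.2 AddSubgroup.subset_closure
        rw [← hS] at hm
        exact h2 hm
    · refine ⟨S, Set.Subset.antisymm ?_ ?_⟩
      · apply coneOf_subset
        rintro y ⟨m, hm, rfl⟩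
        rw [← hS] at hm
        exact cone_closure _ m hm
      · exact coneOf_mono (Set.image_mono hSM)
  · rintro ⟨hG, t, ht⟩
    -- Step 1: each cone generator has a positive multiple in M
    have htM : ∀ τ ∈ t, ∃ d : ℕ, 0 < d ∧ d • τ ∈ M := by
      intro τ hτ
      refine exists_nsmul_mem M τ ?_
      rw [ht]
      exact mem_coneOf_self ⟨τ, hτ, rfl⟩
    choose! dd hdd1 hdd2 using htM
    set t' : Finset (Fin r → ℚ) := t.image (fun τ => dd τ • τ) with ht'def
    have ht'M : (t' : Set (Fin r → ℚ)) ⊆ ↑M := by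
      intro x hx
      simp only [ht'def, Finset.coe_image, Set.mem_image, Finset.mem_coe] at hx
      obtain ⟨τ, hτ, rfl⟩ := hx
      exact hdd2 τ hτ
    have hcone1 : coneOf (toR '' (↑t : Set (Fin r → ℚ)))
        = coneOf (toR '' (↑t' : Set (Fin r → ℚ))) := by
      apply Set.Subset.antisymm
      · apply coneOf_subset
        rintro y ⟨τ, hτ, rfl⟩
        have h1 : toR (dd τ • τ) ∈ toR '' (↑t' : Set (Fin r → ℚ)) := by
          refine ⟨dd τ • τ, ?_, rfl⟩
          simp only [ht'def, Finset.coe_image, Set.mem_image, Finset.mem_coe]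
          exact ⟨τ, hτ, rfl⟩
        have hd0 : (0 : ℝ) < (dd τ : ℝ) := by exact_mod_cast hdd1 τ hτ
        have h2 : toR τ = ((dd τ : ℝ))⁻¹ • toR (dd τ • τ) := by
          rw [toR_nsmul, inv_smul_smul₀ hd0.ne']
        rw [h2]
        exact smul_mem_coneOf (by positivity) (mem_coneOf_self h1)
      · apply coneOf_subset
        rintro y ⟨x, hx, rfl⟩
        simp only [ht'def, Finset.coe_image, Set.mem_image, Finset.mem_coe] at hx
        obtain ⟨τ, hτ, rfl⟩ := hx
        rw [toR_nsmul]
        exact smul_mem_coneOf (by positivity) (mem_coneOf_self ⟨τ, hτ, rfl⟩)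
    have hC : coneOf (toR '' (M : Set (Fin r → ℚ)))
        = coneOf (toR '' (↑t' : Set (Fin r → ℚ))) := ht.trans hcone1
    set G := AddSubgroup.closure (M : Set (Fin r → ℚ)) with hGdef
    have hMG : ∀ m ∈ M, m ∈ G := fun m hm => AddSubgroup.subset_closure hm
    set B : Fin r → ℚ := fun i => ∑ τ ∈ t', |τ i| with hB
    set F : Set (Fin r → ℚ) := {g | g ∈ G ∧ ∀ i, |g i| ≤ B i} with hFdef
    have hF : F.Finite := bounded_finite G hG B
    -- decomposition of each element of M
    have hdec : ∀ m ∈ M, ∃ a : (Fin r → ℚ) → ℕ, ∃ f ∈ F,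
        m = (∑ τ ∈ t', a τ • τ) + f := by
      intro m hm
      have hmc : toR m ∈ coneOf (toR '' (↑t' : Set (Fin r → ℚ))) := by
        rw [← hC]
        exact mem_coneOf_self ⟨m, hm, rfl⟩
      obtain ⟨q, hq0, hqe⟩ := stepC_finset t' m hmc
      set a : (Fin r → ℚ) → ℕ := fun τ => (⌊q τ⌋).toNat with ha
      have hfloor : ∀ τ, ((a τ : ℚ)) = ((⌊q τ⌋ : ℤ) : ℚ) := by
        intro τ
        have h0 : (0 : ℤ) ≤ ⌊q τ⌋ := Int.floor_nonneg.2 (hq0 τ)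
        rw [ha]
        exact_mod_cast congrArg (fun z : ℤ => (z : ℚ)) (Int.toNat_of_nonneg h0)
      set f : Fin r → ℚ := m - ∑ τ ∈ t', a τ • τ with hf
      have hfe : f = ∑ τ ∈ t', (q τ - (⌊q τ⌋ : ℤ)) • τ := by
        rw [hf]
        conv_lhs => rw [hqe]
        rw [← Finset.sum_sub_distrib]
        refine Finset.sum_congr rfl fun τ _ => ?_
        rw [← Nat.cast_smul_eq_nsmul ℚ (a τ), hfloor τ, ← sub_smul]
      refine ⟨a, f, ⟨?_, ?_⟩, by rw [hf]; ring⟩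
      · refine sub_mem (hMG m hm) ?_
        exact sum_mem (fun τ hτ => nsmul_mem (hMG τ (ht'M hτ)) _)
      · intro i
        rw [hfe, hB]
        have h1 : (∑ τ ∈ t', (q τ - (⌊q τ⌋ : ℤ)) • τ) i
            = ∑ τ ∈ t', (q τ - (⌊q τ⌋ : ℤ)) * τ i := by
          rw [Finset.sum_apply]
          rfl
        rw [h1]
        refine le_trans (Finset.abs_sum_le_sum_abs _ _) (Finset.sum_le_sum fun τ _ => ?_)
        rw [abs_mul]
        refine mul_le_of_le_one_left (abs_nonneg _) ?_
        rw [abs_of_nonneg (by linarith [Int.floor_le (q τ)] : (0:ℚ) ≤ q τ - (⌊q τ⌋ : ℤ))]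
        linarith [Int.lt_floor_add_one (q τ)]
    -- Dickson's lemma argument
    set Sf : (Fin r → ℚ) → Set ({x // x ∈ t'} → ℕ) :=
      fun f => {a | (∑ τ : {x // x ∈ t'}, a τ • (τ : Fin r → ℚ)) + f ∈ M} with hSf
    set Mins : (Fin r → ℚ) → Set ({x // x ∈ t'} → ℕ) :=
      fun f => {b | b ∈ Sf f ∧ ∀ c ∈ Sf f, c ≤ b → c = b} with hMins
    set gen : Set (Fin r → ℚ) := ↑t' ∪ ⋃ f ∈ F,
      (fun b : {x // x ∈ t'} → ℕ =>
        (∑ τ : {x // x ∈ t'}, b τ • (τ : Fin r → ℚ)) + f) '' (Mins f) with hgen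
    have hgenfin : gen.Finite :=
      (t'.finite_toSet).union (hF.biUnion (fun f _ => ((minimals_finite (Sf f)).image _)))
    have hgenM : gen ⊆ ↑M := by
      rintro x (hx | hx)
      · exact ht'M hx
      · simp only [Set.mem_iUnion, Set.mem_image] at hx
        obtain ⟨f, hf, b, hb, rfl⟩ := hx
        exact hb.1
    refine (AddSubmonoid.fg_iff M).2 ⟨gen, ?_, hgenfin⟩
    apply le_antisymm
    · exact AddSubmonoid.closure_le.2 hgenM
    · intro m hm
      obtain ⟨a, f, hfF, hmeq⟩ := hdec m hm
      set a' : {x // x ∈ t'} → ℕ := fun τ => a ↑τ with ha'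
      have hsum_eq : (∑ τ : {x // x ∈ t'}, a' τ • (τ : Fin r → ℚ)) = ∑ τ ∈ t', a τ • τ := by
        rw [ha']
        exact Finset.sum_coe_sort t' (fun τ => a τ • τ)
      have ha'S : a' ∈ Sf f := by
        simp only [hSf, Set.mem_setOf_eq]
        rw [hsum_eq, ← hmeq]
        exact hm
      obtain ⟨b, hbS, hble, hbmin⟩ := exists_minimal_le (Sf f) a' ha'S
      have hbMins : b ∈ Mins f := ⟨hbS, hbmin⟩
      have hsplit : m = ((∑ τ : {x // x ∈ t'}, b τ • (τ : Fin r → ℚ)) + f)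
          + ∑ τ : {x // x ∈ t'}, (a' τ - b τ) • (τ : Fin r → ℚ) := by
        rw [hmeq, ← hsum_eq]
        have hterm : ∀ τ : {x // x ∈ t'},
            a' τ • (τ : Fin r → ℚ) = b τ • (τ : Fin r → ℚ) + (a' τ - b τ) • (τ : Fin r → ℚ) := by
          intro τ
          rw [← add_nsmul, Nat.add_sub_cancel' (hble τ)]
        rw [Finset.sum_congr rfl (fun τ _ => hterm τ), Finset.sum_add_distrib]
        abel
      rw [hsplit]
      refine AddSubmonoid.add_mem _ ?_ ?_
      · exact AddSubmonoid.subset_closure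
          (Set.mem_union_right _ (Set.mem_biUnion hfF ⟨b, hbMins, rfl⟩))
      · exact AddSubmonoid.sum_mem _ (fun τ _ => AddSubmonoid.nsmul_mem _
          (AddSubmonoid.subset_closure (Set.mem_union_left _ (Finset.mem_coe.2 τ.2))) _)



end Gordan

/-- Gordan's Lemma, general form: a (commutative, cancellative, torsion-free) monoid
of finite rank — identified with a submonoid of `ℚ^r` — is finitely generated if and
only if its group of differences is finitely generated and the cone `ℝ₊M ⊆ ℝ^r` is a
finite polyhedral rational cone (spanned by finitely many rational vectors). -/
theorem stmt3 {r : ℕ} (M : AddSubmonoid (Fin r → ℚ)) :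
    M.FG ↔
      (AddSubgroup.closure (M : Set (Fin r → ℚ))).FG ∧
      ∃ t : Finset (Fin r → ℚ),
        coneOf (toR '' (M : Set (Fin r → ℚ))) = coneOf (toR '' (↑t : Set (Fin r → ℚ))) := Gordan.main M
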